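/- Let α > 2, δ = 2/α, and let B₁, B₂, F > 0. Define f : (0,F) → ℝ by f(x) = (2^{B₁/x} − 1)^δ + (2^{B₂/(F−x)} − 1)^δ. Then f is strictly convex on the open interval (0,F). -/

import Mathlib

open Real Set

private lemma key_strictConvex (B δ : ℝ) (hB : 0 < B) (hδ0 : 0 < δ) (hδ1 : δ < 1) :
    StrictConvexOn ℝ (Set.Ioi (0:ℝ)) (fun x : ℝ => ((2:ℝ) ^ (B / x) - 1) ^ δ) := by
  have hc : 0 < Real.log 2 := Real.log_pos one_lt_two
  set c : ℝ := Real.log 2 with hcdef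
  set f : ℝ → ℝ := fun x : ℝ => ((2:ℝ) ^ (B / x) - 1) ^ δ with hf
  set F1 : ℝ → ℝ := fun x : ℝ =>
    (c * B * δ) * (((2:ℝ) ^ (B / x) * (-(x ^ 2)⁻¹)) * ((2:ℝ) ^ (B / x) - 1) ^ (δ - 1)) with hF1
  -- basic facts
  have hW : ∀ x : ℝ, x ∈ Set.Ioi (0:ℝ) → 1 < (2:ℝ) ^ (B / x) := by
    intro x hx
    rw [Set.mem_Ioi] at hx
    exact Real.one_lt_rpow_iff_of_pos two_pos |>.2 (Or.inl ⟨one_lt_two, div_pos hB hx⟩)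
  -- derivative of w x = 2 ^ (B/x)
  have hwd : ∀ x : ℝ, x ∈ Set.Ioi (0:ℝ) →
      HasDerivAt (fun y : ℝ => (2:ℝ) ^ (B / y))
        ((2:ℝ) ^ (B / x) * c * (B * (-(x ^ 2)⁻¹))) x := by
    intro x hx
    rw [Set.mem_Ioi] at hx
    have hinner : HasDerivAt (fun y : ℝ => B / y) (B * (-(x ^ 2)⁻¹)) x := by
      simpa [div_eq_mul_inv] using (hasDerivAt_inv hx.ne').const_mul B
    have hout := (Real.hasStrictDerivAt_const_rpow (a := 2) two_pos (B / x)).hasDerivAt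
    exact hout.comp x hinner
  -- first derivative of f
  have hfd : ∀ x : ℝ, x ∈ Set.Ioi (0:ℝ) → HasDerivAt f (F1 x) x := by
    intro x hx
    have hne : (2:ℝ) ^ (B / x) - 1 ≠ 0 := (sub_pos.2 (hW x hx)).ne'
    have h := ((hwd x hx).sub_const 1).rpow_const (p := δ) (Or.inl hne)
    convert h using 1
    simp only [hF1]
    ring
  -- second derivative of f
  set V : ℝ → ℝ := fun x : ℝ =>
    (c * B * δ) *
      ((((2:ℝ) ^ (B / x) * c * (B * (-(x ^ 2)⁻¹))) * (-(x ^ 2)⁻¹)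
          + (2:ℝ) ^ (B / x) * (2 * x ^ 1 / (x ^ 2) ^ 2)) * ((2:ℝ) ^ (B / x) - 1) ^ (δ - 1)
        + ((2:ℝ) ^ (B / x) * (-(x ^ 2)⁻¹)) *
            (((2:ℝ) ^ (B / x) * c * (B * (-(x ^ 2)⁻¹))) * (δ - 1) *
              ((2:ℝ) ^ (B / x) - 1) ^ (δ - 1 - 1))) with hV
  have hF1d : ∀ x : ℝ, x ∈ Set.Ioi (0:ℝ) → HasDerivAt F1 (V x) x := by
    intro x hx
    have hx0 : (0:ℝ) < x := hx
    have hne : (2:ℝ) ^ (B / x) - 1 ≠ 0 := (sub_pos.2 (hW x hx)).ne'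
    have hinv : HasDerivAt (fun y : ℝ => -(y ^ 2)⁻¹) (2 * x ^ 1 / (x ^ 2) ^ 2) x := by
      have h := ((hasDerivAt_pow 2 x).inv (pow_ne_zero 2 hx0.ne')).neg
      refine h.congr_deriv ?_
      push_cast
      ring
    have hR : HasDerivAt (fun y : ℝ => ((2:ℝ) ^ (B / y) - 1) ^ (δ - 1))
        (((2:ℝ) ^ (B / x) * c * (B * (-(x ^ 2)⁻¹))) * (δ - 1) *
          ((2:ℝ) ^ (B / x) - 1) ^ (δ - 1 - 1)) x :=
      ((hwd x hx).sub_const 1).rpow_const (p := δ - 1) (Or.inl hne)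
    exact ((((hwd x hx).mul hinv).mul hR).const_mul (c * B * δ))
  -- positivity of the second derivative
  have hVpos : ∀ x : ℝ, x ∈ Set.Ioi (0:ℝ) → 0 < V x := by
    intro x hx
    have hx0 : (0:ℝ) < x := hx
    set W : ℝ := (2:ℝ) ^ (B / x) with hWdef
    have hW1 : 1 < W := hW x hx
    set S : ℝ := (W - 1) ^ (δ - 1 - 1) with hSdef
    have hS : 0 < S := Real.rpow_pos_of_pos (sub_pos.2 hW1) _
    have hRS : (W - 1) ^ (δ - 1) = S * (W - 1) := by
      have : δ - 1 = (δ - 1 - 1) + 1 := by ring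
      rw [this, Real.rpow_add (sub_pos.2 hW1), Real.rpow_one]
    -- lower bound on W
    have hlb : c * (B / x) + 1 < W := by
      have h2 : c * (B / x) + 1 < Real.exp (c * (B / x)) :=
        Real.add_one_lt_exp (by positivity)
      rwa [hWdef, Real.rpow_def_of_pos two_pos]
    have h1 : c * B < x * (W - 1) := by
      have h2 : c * (B / x) < W - 1 := by linarith
      calc c * B = (c * (B / x)) * x := by field_simp
        _ < (W - 1) * x := mul_lt_mul_of_pos_right h2 hx0
        _ = x * (W - 1) := by ring
    have hbr : 0 < 2 * x * (W - 1) + c * B * (δ * W - 1) := by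
      nlinarith [mul_pos hc hB, mul_pos (mul_pos hc hB) (mul_pos hδ0 (lt_trans one_pos hW1))]
    have hVeq : V x = (c * B * δ) * S * W * (2 * x * (W - 1) + c * B * (δ * W - 1)) / x ^ 4 := by
      simp only [hV]
      rw [← hWdef, hRS, ← hSdef]
      field_simp
      ring
    rw [hVeq]
    have hnum : 0 < (c * B * δ) * S * W * (2 * x * (W - 1) + c * B * (δ * W - 1)) := by
      have := mul_pos (mul_pos (mul_pos (mul_pos (mul_pos hc hB) hδ0) hS)
        (lt_trans one_pos hW1)) hbr
      linarith [this]
    exact div_pos hnum (by positivity)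
  -- assemble
  apply strictConvexOn_of_deriv2_pos (convex_Ioi 0)
  · intro x hx
    exact (hfd x hx).continuousAt.continuousWithinAt
  · intro x hx
    rw [interior_Ioi] at hx
    have hEq : deriv f =ᶠ[nhds x] F1 :=
      Filter.eventuallyEq_of_mem (isOpen_Ioi.mem_nhds hx) (fun y hy => (hfd y hy).deriv)
    have : deriv^[2] f x = deriv (deriv f) x := by simp [Function.iterate_succ]
    rw [this, hEq.deriv_eq, (hF1d x hx).deriv]
    exact hVpos x hx

theorem bandwidth_objective_strictConvexOn (α : ℝ) (hα : 2 < α) (B₁ B₂ F : ℝ)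
    (hB₁ : 0 < B₁) (hB₂ : 0 < B₂) (hF : 0 < F) :
    StrictConvexOn ℝ (Set.Ioo (0 : ℝ) F)
      (fun x : ℝ =>
        ((2 : ℝ) ^ (B₁ / x) - 1) ^ (2 / α) + ((2 : ℝ) ^ (B₂ / (F - x)) - 1) ^ (2 / α)) := by
  have hα0 : (0:ℝ) < α := lt_trans two_pos hα
  have hδ0 : 0 < 2 / α := div_pos two_pos hα0
  have hδ1 : 2 / α < 1 := (div_lt_one hα0).2 hα
  have key1 := key_strictConvex B₁ (2 / α) hB₁ hδ0 hδ1
  have key2 := key_strictConvex B₂ (2 / α) hB₂ hδ0 hδ1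
  have term1 : StrictConvexOn ℝ (Set.Ioo (0:ℝ) F)
      (fun x : ℝ => ((2:ℝ) ^ (B₁ / x) - 1) ^ (2 / α)) :=
    key1.subset Set.Ioo_subset_Ioi_self (convex_Ioo 0 F)
  have term2 : StrictConvexOn ℝ (Set.Ioo (0:ℝ) F)
      (fun x : ℝ => ((2:ℝ) ^ (B₂ / (F - x)) - 1) ^ (2 / α)) := by
    refine ⟨convex_Ioo 0 F, ?_⟩
    intro x hx y hy hxy a b ha hb hab
    have hx' : F - x ∈ Set.Ioi (0:ℝ) := by
      simp only [Set.mem_Ioi]; linarith [hx.2]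
    have hy' : F - y ∈ Set.Ioi (0:ℝ) := by
      simp only [Set.mem_Ioi]; linarith [hy.2]
    have hne : F - x ≠ F - y := fun h => hxy (by linarith)
    have h := key2.2 hx' hy' hne ha hb hab
    have hpt : F - (a • x + b • y) = a • (F - x) + b • (F - y) := by
      simp only [smul_eq_mul]
      linear_combination (-F) * hab
    simp only [smul_eq_mul] at h ⊢
    rw [show F - (a * x + b * y) = a * (F - x) + b * (F - y) by linear_combination (-F) * hab]
    exact h
  exact term1.add term2
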